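/- On a normal metric weak para-f-structure, N^{(2)}_i(X,Y) = η^i([Q̃X, fY]), where Q̃ = Q - id and N^{(2)}_i(X,Y) = (£_{fX} η^i)Y - (£_{fY} η^i)X; moreover, the characteristic distribution ker f is totally geodesic, i.e., ∇_{ξ_i} ξ_j + ∇_{ξ_j} ξ_i = 0 for all i, j. -/
import Mathlib


open scoped BigOperators

noncomputable section

variable (C V : Type*) [CommRing C] [Algebra ℝ C] [AddCommGroup V]
  [Module ℝ V] [Module C V] [IsScalarTower ℝ C V]

/-- A metric weak para-f-structure on a manifold, modelled algebraically:
`C` plays the role of the ring of smooth functions, `V` the `C`-module of vector fields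
with Lie bracket `b` and derivation action `act` of vector fields on functions,
`g` is a compatible pseudo-Riemannian metric (with `f` of rank `2n`, encoded by `hrank`)
and `nabla` its Levi-Civita connection (torsion-free and metric). -/
structure MWPF (p : ℕ) where
  f : V →ₗ[C] V
  Q : V →ₗ[C] V
  ξ : Fin p → V
  η : Fin p → V →ₗ[C] C
  g : V →ₗ[C] V →ₗ[C] C
  b : V → V → V
  act : V → C → C
  nabla : V → V → V
  hQbij : Function.Bijective Q
  hf2 : ∀ X, f (f X) = Q X - ∑ i, η i X • ξ i
  hf3 : ∀ X, f (f (f X)) = f (Q X)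
  hetaxi : ∀ i j, η i (ξ j) = if i = j then (1 : C) else 0
  hQxi : ∀ i, Q (ξ i) = ξ i
  hrange : ∀ X : V, X ∈ LinearMap.range f ↔ ∀ i, η i X = 0
  hgsymm : ∀ X Y, g X Y = g Y X
  hgnondeg : ∀ X, (∀ Y, g X Y = 0) → X = 0
  hrank : ∀ Z, (∀ i, η i Z = 0) → (∀ Y, g Z (f Y) = 0) → Z = 0
  hgcompat : ∀ X Y, g (f X) (f Y) = -(g X (Q Y)) + ∑ i, η i X * η i Y
  hbskew : ∀ X Y, b X Y = - b Y X
  hbaddl : ∀ X Y Z, b (X + Y) Z = b X Z + b Y Z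
  hjacobi : ∀ X Y Z, b X (b Y Z) + b Y (b Z X) + b Z (b X Y) = 0
  hactadd : ∀ X a c, act X (a + c) = act X a + act X c
  hactmul : ∀ X a c, act X (a * c) = act X a * c + a * act X c
  hactX : ∀ (a : C) X Y c, act (a • X + Y) c = a * act X c + act Y c
  hbleib : ∀ X (a : C) Y, b X (a • Y) = act X a • Y + a • b X Y
  hnab1 : ∀ (a : C) X X' Y, nabla (a • X + X') Y = a • nabla X Y + nabla X' Y
  hnabadd : ∀ X Y Z, nabla X (Y + Z) = nabla X Y + nabla X Z
  hnableib : ∀ X (a : C) Y, nabla X (a • Y) = act X a • Y + a • nabla X Y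
  htors : ∀ X Y, nabla X Y - nabla Y X = b X Y
  hmetric : ∀ X Y Z, act X (g Y Z) = g (nabla X Y) Z + g Y (nabla X Z)

namespace MWPF

variable {C V} {p : ℕ} (s : MWPF C V p)

/-- The fundamental 2-form `Φ(X,Y) = g(X, fY)`. -/
def Phi (X Y : V) : C := s.g X (s.f Y)

/-- `dη^i(X,Y) = (1/2)(X(η^i Y) - Y(η^i X) - η^i [X,Y])`. -/
def dEta (i : Fin p) (X Y : V) : C :=
  (2⁻¹ : ℝ) • (s.act X (s.η i Y) - s.act Y (s.η i X) - s.η i (s.b X Y))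

/-- The Nijenhuis torsion `[f,f]`. -/
def Nij (X Y : V) : V :=
  s.f (s.f (s.b X Y)) + s.b (s.f X) (s.f Y) - s.f (s.b (s.f X) Y) - s.f (s.b X (s.f Y))

/-- `N^(1)(X,Y) = [f,f](X,Y) - 2 Σ_i dη^i(X,Y) ξ_i`. -/
def N1 (X Y : V) : V := s.Nij X Y - (2 : ℝ) • ∑ i, s.dEta i X Y • s.ξ i

/-- The difference tensor `Q̃ = Q - id`. -/
def Qt (X : V) : V := s.Q X - X

/-- The Lie derivative of `f`: `(£_Z f)X = [Z, fX] - f[Z,X]`. -/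
def Lief (Z X : V) : V := s.b Z (s.f X) - s.f (s.b Z X)

/-- The Lie derivative of `g`: `(£_Z g)(X,Y) = Z(g(X,Y)) - g([Z,X],Y) - g(X,[Z,Y])`. -/
def Lieg (Z X Y : V) : C := s.act Z (s.g X Y) - s.g (s.b Z X) Y - s.g X (s.b Z Y)

/-- `N^(2)_i(X,Y) = (£_{fX} η^i)Y - (£_{fY} η^i)X`. -/
def N2 (i : Fin p) (X Y : V) : C :=
  (s.act (s.f X) (s.η i Y) - s.η i (s.b (s.f X) Y))
    - (s.act (s.f Y) (s.η i X) - s.η i (s.b (s.f Y) X))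

/-- The exterior differential of the fundamental 2-form. -/
def dPhi (X Y Z : V) : C := (3⁻¹ : ℝ) •
  (s.act X (s.Phi Y Z) + s.act Y (s.Phi Z X) + s.act Z (s.Phi X Y)
    - s.Phi (s.b X Y) Z - s.Phi (s.b Z X) Y - s.Phi (s.b Y Z) X)

/-- The tensor `h_i = (1/2) £_{ξ_i} f`. -/
def hmap (i : Fin p) (X : V) : V := (2⁻¹ : ℝ) • s.Lief (s.ξ i) X

/-- The tensor `N^(5)`. -/
def N5 (X Y Z : V) : C :=
  s.act (s.f Z) (s.g X (s.Qt Y)) - s.act (s.f Y) (s.g X (s.Qt Z))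
    + s.g (s.b X (s.f Z)) (s.Qt Y) - s.g (s.b X (s.f Y)) (s.Qt Z)
    + s.g (s.b Y (s.f Z) - s.b Z (s.f Y) - s.f (s.b Y Z)) (s.Qt X)

/-- The curvature tensor of `nabla`. -/
def Rm (X Y Z : V) : V :=
  s.nabla X (s.nabla Y Z) - s.nabla Y (s.nabla X Z) - s.nabla (s.b X Y) Z

section Aux

set_option linter.unusedSectionVars false

lemma act_zero (X : V) : s.act X 0 = 0 := by
  have h := s.hactadd X 0 0
  simp only [add_zero] at h
  exact left_eq_add.mp h

lemma act_one (X : V) : s.act X 1 = 0 := by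
  have h := s.hactmul X 1 1
  simp only [mul_one, one_mul] at h
  linear_combination -h

lemma act_ite (X : V) (i j : Fin p) :
    s.act X (if i = j then (1 : C) else 0) = 0 := by
  by_cases h : i = j <;> simp [h, s.act_one, s.act_zero]

lemma b_add_right (X Y Z : V) : s.b X (Y + Z) = s.b X Y + s.b X Z := by
  rw [s.hbskew X (Y + Z), s.hbaddl, s.hbskew Y X, s.hbskew Z X]
  abel

lemma b_zero_right (Z : V) : s.b Z 0 = 0 := by
  have h := s.b_add_right Z 0 0
  simp only [add_zero] at h
  exact left_eq_add.mp h

lemma b_zero_left (Z : V) : s.b 0 Z = 0 := by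
  rw [s.hbskew, s.b_zero_right, neg_zero]

lemma b_sub_left (X Y Z : V) : s.b (X - Y) Z = s.b X Z - s.b Y Z := by
  have h := s.hbaddl (X - Y) Y Z
  rw [sub_add_cancel] at h
  rw [h]; abel

lemma b_sum_right {ι : Type*} (X : V) (t : Finset ι) (v : ι → V) :
    s.b X (∑ j ∈ t, v j) = ∑ j ∈ t, s.b X (v j) :=
  map_sum (AddMonoidHom.mk' (s.b X) (s.b_add_right X)) v t

lemma eta_f (i : Fin p) (X : V) : s.η i (s.f X) = 0 :=
  (s.hrange (s.f X)).mp ⟨X, rfl⟩ i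

lemma eta_sum (i : Fin p) (X : V) :
    s.η i (∑ j, s.η j X • s.ξ j) = s.η i X := by
  rw [map_sum]
  simp only [map_smul, s.hetaxi, smul_eq_mul, mul_ite, mul_one, mul_zero]
  simp [Finset.sum_ite_eq]

lemma eta_Q (i : Fin p) (X : V) : s.η i (s.Q X) = s.η i X := by
  have h := congrArg (s.η i) (s.hf2 X)
  rw [s.eta_f, map_sub, s.eta_sum] at h
  linear_combination -h

lemma f_xi (j : Fin p) : s.f (s.ξ j) = 0 := by
  have h2 : s.f (s.f (s.ξ j)) = 0 := by
    rw [s.hf2, s.hQxi, sub_eq_zero]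
    simp only [s.hetaxi]
    simp [ite_smul, Finset.sum_ite_eq]
  have h3 := s.hf3 (s.ξ j)
  rw [s.hQxi, h2, map_zero] at h3
  exact h3.symm

/-- Projection of the normality condition by `η^i`. -/
lemma key (hN : ∀ X Y, s.N1 X Y = 0) (i : Fin p) (X Y : V) :
    s.η i (s.b (s.f X) (s.f Y))
      = s.act X (s.η i Y) - s.act Y (s.η i X) - s.η i (s.b X Y) := by
  have h0 := hN X Y
  unfold MWPF.N1 MWPF.Nij at h0
  have h := congrArg (s.η i) h0
  simp only [map_zero, map_sub, map_add, map_sum, LinearMap.map_smul_of_tower,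
    map_smul, s.eta_f, s.hetaxi, smul_eq_mul, mul_ite, mul_one, mul_zero,
    Finset.sum_ite_eq, Finset.mem_univ, if_true, zero_add, zero_sub, sub_zero] at h
  have hd : (2:ℝ) • s.dEta i X Y
      = s.act X (s.η i Y) - s.act Y (s.η i X) - s.η i (s.b X Y) := by
    unfold MWPF.dEta
    rw [smul_smul, show (2:ℝ) * 2⁻¹ = 1 by norm_num, one_smul]
  rw [hd] at h
  linear_combination h

lemma xilem (hN : ∀ X Y, s.N1 X Y = 0) (i j : Fin p) (Y : V) :
    s.η i (s.b (s.ξ j) Y) = s.act (s.ξ j) (s.η i Y) := by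
  have h := s.key hN i (s.ξ j) Y
  rw [s.f_xi, s.b_zero_left, map_zero, s.hetaxi, s.act_ite] at h
  linear_combination h

lemma g_xi (j : Fin p) (X : V) : s.g X (s.ξ j) = s.η j X := by
  have h := s.hgcompat X (s.ξ j)
  rw [s.f_xi, map_zero, s.hQxi] at h
  simp only [s.hetaxi, mul_ite, mul_one, mul_zero, Finset.sum_ite_eq',
    Finset.mem_univ, if_true] at h
  linear_combination h

lemma sum_lemma (hN : ∀ X Y, s.N1 X Y = 0) (i : Fin p) (X Y : V) :
    s.η i (s.b (s.f Y) (∑ j, s.η j X • s.ξ j)) = s.act (s.f Y) (s.η i X) := by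
  rw [s.b_sum_right, map_sum]
  have h : ∀ j, s.η i (s.b (s.f Y) (s.η j X • s.ξ j))
      = if i = j then s.act (s.f Y) (s.η j X) else 0 := by
    intro j
    have hb : s.η i (s.b (s.f Y) (s.ξ j)) = 0 := by
      rw [s.hbskew, map_neg, s.xilem hN, s.eta_f, s.act_zero, neg_zero]
    rw [s.hbleib, map_add, map_smul, map_smul, s.hetaxi, hb, smul_eq_mul,
      smul_eq_mul, mul_ite, mul_one, mul_zero, mul_zero, add_zero]
  simp_rw [h]
  simp [Finset.sum_ite_eq]

end Aux

end MWPF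

/-- on a normal metric weak para-f-structure,
`N^(2)_i(X,Y) = η^i([Q̃X, fY])`, and `ker f` is totally geodesic:
`∇_{ξ_i} ξ_j + ∇_{ξ_j} ξ_i = 0`. -/
theorem normal_N2_and_totally_geodesic {C V : Type*} [CommRing C] [Algebra ℝ C]
    [AddCommGroup V] [Module ℝ V] [Module C V] [IsScalarTower ℝ C V] {p : ℕ}
    (s : MWPF C V p) (hN : ∀ X Y, s.N1 X Y = 0) :
    (∀ (i : Fin p) (X Y : V), s.N2 i X Y = s.η i (s.b (s.Qt X) (s.f Y))) ∧
    (∀ i j : Fin p, s.nabla (s.ξ i) (s.ξ j) + s.nabla (s.ξ j) (s.ξ i) = 0) := by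
  constructor
  · intro i X Y
    have E1 := s.key hN i (s.f X) Y
    rw [s.eta_f i X, s.act_zero] at E1
    have hS : s.η i (s.b (∑ j, s.η j X • s.ξ j) (s.f Y))
        = - s.act (s.f Y) (s.η i X) := by
      rw [s.hbskew, map_neg, s.sum_lemma hN]
    have E2 : s.η i (s.b (s.f (s.f X)) (s.f Y))
        = s.η i (s.b (s.Q X) (s.f Y)) + s.act (s.f Y) (s.η i X) := by
      rw [s.hf2, s.b_sub_left, map_sub, hS]
      ring
    have hQt : s.η i (s.b (s.Qt X) (s.f Y))
        = s.η i (s.b (s.Q X) (s.f Y)) - s.η i (s.b X (s.f Y)) := by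
      unfold MWPF.Qt
      rw [s.b_sub_left, map_sub]
    have hswap : s.η i (s.b X (s.f Y)) = - s.η i (s.b (s.f Y) X) := by
      rw [s.hbskew X, map_neg]
    unfold MWPF.N2
    linear_combination -E1 + E2 - hQt + hswap
  · intro i j
    apply s.hgnondeg
    intro Z
    rw [map_add, LinearMap.add_apply]
    -- metric identities
    have m1 := s.hmetric (s.ξ i) (s.ξ j) Z
    have m2 := s.hmetric (s.ξ j) (s.ξ i) Z
    have m3 := s.hmetric Z (s.ξ i) (s.ξ j)
    -- torsion-freeness
    have t1 : s.nabla (s.ξ i) Z = s.nabla Z (s.ξ i) + s.b (s.ξ i) Z := by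
      have h := s.htors (s.ξ i) Z
      rw [sub_eq_iff_eq_add] at h
      rw [h]; abel
    have t2 : s.nabla (s.ξ j) Z = s.nabla Z (s.ξ j) + s.b (s.ξ j) Z := by
      have h := s.htors (s.ξ j) Z
      rw [sub_eq_iff_eq_add] at h
      rw [h]; abel
    -- rewrite the g(ξ, ∇ Z) terms
    have B1 : s.g (s.ξ j) (s.nabla (s.ξ i) Z)
        = s.η j (s.nabla Z (s.ξ i)) + s.act (s.ξ i) (s.η j Z) := by
      rw [t1, map_add, s.hgsymm (s.ξ j) (s.nabla Z (s.ξ i)),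
        s.hgsymm (s.ξ j) (s.b (s.ξ i) Z)]
      simp only [s.g_xi]
      rw [s.xilem hN]
    have B2 : s.g (s.ξ i) (s.nabla (s.ξ j) Z)
        = s.η i (s.nabla Z (s.ξ j)) + s.act (s.ξ j) (s.η i Z) := by
      rw [t2, map_add, s.hgsymm (s.ξ i) (s.nabla Z (s.ξ j)),
        s.hgsymm (s.ξ i) (s.b (s.ξ j) Z)]
      simp only [s.g_xi]
      rw [s.xilem hN]
    -- simplify m1, m2, m3
    have hgjZ : s.g (s.ξ j) Z = s.η j Z := by rw [s.hgsymm, s.g_xi]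
    have hgiZ : s.g (s.ξ i) Z = s.η i Z := by rw [s.hgsymm, s.g_xi]
    rw [hgjZ, B1] at m1
    rw [hgiZ, B2] at m2
    rw [s.hgsymm (s.ξ i) (s.nabla Z (s.ξ j))] at m3
    simp only [s.g_xi] at m3
    rw [s.hetaxi, s.act_ite] at m3
    linear_combination -m1 - m2 + m3
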